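/- For all k, r ∈ ℕ with 1 ≤ r ≤ k and every nonempty finite set V, if γ ∈ P(V^k) is graph-like and C_{k,r}-stable, then its (k−r+1)-projection pr_{k−r+1} γ is C_{k−r+1}-stable. -/

import Mathlib

open Classical Matrix

noncomputable section

/-- `k`-tuples of elements of `V`. -/
abbrev Tup (V : Type) (k : ℕ) := Fin k → V

variable {V : Type}

/-- `v⟨i,x⟩` : the tuple obtained from `v` by substituting, for each `s`,
the entry of `v` in position `i s` by `x s`. -/
def substTup {k r : ℕ} (v : Tup V k) (i : Fin r → Fin k) (x : Tup V r) : Tup V k :=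
  fun j => if h : ∃ s, i s = j then x h.choose else v j

/-- `pr_j v = (v_{j 1}, …, v_{j r})`. -/
def prTup {k r : ℕ} (j : Fin r → Fin k) (v : Tup V k) : Tup V r := fun s => v (j s)

/-- `(w_1, …, w_r, w_r, …, w_r) : V^k`. -/
def extendTup [Nonempty V] {r : ℕ} (k : ℕ) (w : Tup V r) : Tup V k := fun i =>
  if h : (i : ℕ) < r then w ⟨i, h⟩
  else if h' : 0 < r then w ⟨r - 1, by omega⟩
  else Classical.arbitrary V

/-- The `r`-projection `pr_r γ` of a labelled partition (presented as a setoid) of `V^k`. -/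
def prPart [Nonempty V] {k : ℕ} (r : ℕ) (γ : Setoid (Tup V k)) : Setoid (Tup V r) where
  r w w' := γ.r (extendTup k w) (extendTup k w')
  iseqv := ⟨fun _ => γ.iseqv.refl _, fun h => γ.iseqv.symm h, fun h h' => γ.iseqv.trans h h'⟩

/-- `v^τ`, the tuple with `i`-th entry `v (τ⁻¹ i)`. -/
def permTup {k : ℕ} (τ : Equiv.Perm (Fin k)) (v : Tup V k) : Tup V k := fun i => v (τ.symm i)

/-- `γ ⪯ ρ` : the partition `ρ` refines the partition `γ`. -/
def Refines {A : Type*} (γ ρ : Setoid A) : Prop := ∀ u v : A, ρ.r u v → γ.r u v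

/-- `γ ≈ ρ` : the partitions mutually refine each other. -/
def PartEquiv {A : Type*} (γ ρ : Setoid A) : Prop := Refines γ ρ ∧ Refines ρ γ

/-- Invariance of a partition of `V^k` under `Sym(k)`. -/
def Invariant {k : ℕ} (γ : Setoid (Tup V k)) : Prop :=
  ∀ u v : Tup V k, γ.r u v → ∀ τ : Equiv.Perm (Fin k), γ.r (permTup τ u) (permTup τ v)

/-- `r`-consistency of a partition of `V^k`. -/
def Consistent [Nonempty V] {k : ℕ} (r : ℕ) (γ : Setoid (Tup V k)) : Prop :=
  ∀ u v : Tup V k, γ.r u v → ∀ j : Fin r → Fin k,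
    (prPart r γ).r (prTup j u) (prTup j v)

/-- Graph-like partitions of `V^k`. -/
def GraphLike [Nonempty V] {k : ℕ} (γ : Setoid (Tup V k)) : Prop :=
  Invariant γ ∧ (∀ r ≤ k, Consistent r γ) ∧
    ∀ u v : Tup V k, γ.r u v → ∀ i j : Fin k, u i = u j → v i = v j

/-- `{x ∈ V^r : γ(u⟨i,x⟩) = φ_i for all i ∈ [k]^(r)}`, where the colour tuple `φ` is
given by representatives. -/
def WLSet {k r : ℕ} (γ : Setoid (Tup V k)) (u : Tup V k)
    (φ : (Fin r → Fin k) → Tup V k) : Set (Tup V r) :=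
  {x | ∀ i : Fin r → Fin k, Function.Injective i → γ.r (substTup u i x) (φ i)}

/-- `{x ∈ V^r : γ(u⟨i,x⟩) = σ}`, where the colour `σ` is given by a representative `w`. -/
def CSet {k r : ℕ} (γ : Setoid (Tup V k)) (u : Tup V k)
    (i : Fin r → Fin k) (w : Tup V k) : Set (Tup V r) :=
  {x | γ.r (substTup u i x) w}

/-- `WL_{k,r}`-stability of a partition of `V^k`. -/
def WLStable {k : ℕ} (r : ℕ) (γ : Setoid (Tup V k)) : Prop :=
  r < k → ∀ u v : Tup V k, γ.r u v →
    ∀ φ : (Fin r → Fin k) → Tup V k, (WLSet γ u φ).ncard = (WLSet γ v φ).ncard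

/-- `C_{k,r}`-stability of a partition of `V^k`. -/
def CStable {k : ℕ} (r : ℕ) (γ : Setoid (Tup V k)) : Prop :=
  r < k → ∀ u v : Tup V k, γ.r u v →
    ∀ i : Fin r → Fin k, Function.Injective i → ∀ w : Tup V k,
      (CSet γ u i w).ncard = (CSet γ v i w).ncard

/-- The matrix `χ^{γ,v}_{i,σ}`, with the colour `σ` given by a representative `w`. -/
def chiMat (F : Type) [Field F] {k : ℕ} (γ : Setoid (Tup V k)) (v : Tup V k)
    (i : Fin 2 → Fin k) (w : Tup V k) : Matrix V V F :=
  Matrix.of fun x y => if γ.r (substTup v i ![x, y]) w then (1 : F) else 0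

/-- The matrix `χ^{γ,v}_φ`, with the colour tuple `φ` given by representatives. -/
def chiMatT (F : Type) [Field F] {k : ℕ} (γ : Setoid (Tup V k)) (v : Tup V k)
    (φ : (Fin 2 → Fin k) → Tup V k) : Matrix V V F :=
  Matrix.of fun x y =>
    if ∀ i : Fin 2 → Fin k, Function.Injective i → γ.r (substTup v i ![x, y]) (φ i)
    then (1 : F) else 0

/-- `IM_k^F`-stability of a partition of `V^k`. -/
def IMStable (F : Type) [Field F] [Fintype V] [DecidableEq V] {k : ℕ}
    (γ : Setoid (Tup V k)) : Prop :=
  2 < k → ∀ u v : Tup V k, γ.r u v →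
    ∀ i : Fin 2 → Fin k, Function.Injective i →
      ∃ S : (Matrix V V F)ˣ, ∀ w : Tup V k,
        (S : Matrix V V F) * chiMat F γ u i w * ((S⁻¹ : (Matrix V V F)ˣ) : Matrix V V F)
          = chiMat F γ v i w

/-- `IMt_k^F`-stability of a partition of `V^k`. -/
def IMtStable (F : Type) [Field F] [Fintype V] [DecidableEq V] {k : ℕ}
    (γ : Setoid (Tup V k)) : Prop :=
  2 < k → ∀ u v : Tup V k, γ.r u v →
    ∃ S : (Matrix V V F)ˣ, ∀ φ : (Fin 2 → Fin k) → Tup V k,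
      (S : Matrix V V F) * chiMatT F γ u φ * ((S⁻¹ : (Matrix V V F)ˣ) : Matrix V V F)
        = chiMatT F γ v φ

/-- The refinement operator `WL_{k,r}`. -/
def WLop {k : ℕ} (r : ℕ) (γ : Setoid (Tup V k)) : Setoid (Tup V k) :=
  if r < k then
    { r := fun u v => γ.r u v ∧ ∀ φ : (Fin r → Fin k) → Tup V k,
        (WLSet γ u φ).ncard = (WLSet γ v φ).ncard
      iseqv := by
        refine ⟨fun u => ⟨γ.iseqv.refl u, fun _ => rfl⟩, ?_, ?_⟩
        · rintro u v ⟨h1, h2⟩; exact ⟨γ.iseqv.symm h1, fun φ => (h2 φ).symm⟩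
        · rintro u v w ⟨h1, h2⟩ ⟨h1', h2'⟩
          exact ⟨γ.iseqv.trans h1 h1', fun φ => (h2 φ).trans (h2' φ)⟩ }
  else γ

/-- The refinement operator `C_{k,r}`. -/
def Cop {k : ℕ} (r : ℕ) (γ : Setoid (Tup V k)) : Setoid (Tup V k) :=
  if r < k then
    { r := fun u v => γ.r u v ∧ ∀ i : Fin r → Fin k, Function.Injective i →
        ∀ w : Tup V k, (CSet γ u i w).ncard = (CSet γ v i w).ncard
      iseqv := by
        refine ⟨fun u => ⟨γ.iseqv.refl u, fun _ _ _ => rfl⟩, ?_, ?_⟩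
        · rintro u v ⟨h1, h2⟩; exact ⟨γ.iseqv.symm h1, fun i hi w => (h2 i hi w).symm⟩
        · rintro u v w ⟨h1, h2⟩ ⟨h1', h2'⟩
          exact ⟨γ.iseqv.trans h1 h1', fun i hi x => (h2 i hi x).trans (h2' i hi x)⟩ }
  else γ


theorem conjRefl {M : Type*} [Monoid M] (A : M) :
    ((1 : Mˣ) : M) * A * (((1 : Mˣ)⁻¹ : Mˣ) : M) = A := by simp

theorem conjSymm {M : Type*} [Monoid M] (S : Mˣ) {A B : M}
    (h : (S : M) * A * ((S⁻¹ : Mˣ) : M) = B) :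
    ((S⁻¹ : Mˣ) : M) * B * (((S⁻¹)⁻¹ : Mˣ) : M) = A := by
  subst h
  rw [inv_inv]
  simp [mul_assoc, Units.inv_mul_cancel_left, Units.inv_mul]

theorem conjTrans {M : Type*} [Monoid M] (S T : Mˣ) {A B C : M}
    (h1 : (S : M) * A * ((S⁻¹ : Mˣ) : M) = B)
    (h2 : (T : M) * B * ((T⁻¹ : Mˣ) : M) = C) :
    ((T * S : Mˣ) : M) * A * (((T * S)⁻¹ : Mˣ) : M) = C := by
  subst h1; subst h2
  simp [Units.val_mul, _root_.mul_inv_rev, mul_assoc]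

/-- The refinement operator `IM_k^F`. -/
def IMop (F : Type) [Field F] [Fintype V] [DecidableEq V] {k : ℕ}
    (γ : Setoid (Tup V k)) : Setoid (Tup V k) :=
  if 2 < k then
    { r := fun u v => γ.r u v ∧ ∀ i : Fin 2 → Fin k, Function.Injective i →
        ∃ S : (Matrix V V F)ˣ, ∀ w : Tup V k,
          (S : Matrix V V F) * chiMat F γ u i w * ((S⁻¹ : (Matrix V V F)ˣ) : Matrix V V F)
            = chiMat F γ v i w
      iseqv := by
        refine ⟨fun u => ⟨γ.iseqv.refl u, fun i _ => ⟨1, fun w => conjRefl _⟩⟩, ?_, ?_⟩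
        · rintro u v ⟨h1, h2⟩
          refine ⟨γ.iseqv.symm h1, fun i hi => ?_⟩
          obtain ⟨S, hS⟩ := h2 i hi
          exact ⟨S⁻¹, fun w => conjSymm S (hS w)⟩
        · rintro u v w ⟨h1, h2⟩ ⟨h1', h2'⟩
          refine ⟨γ.iseqv.trans h1 h1', fun i hi => ?_⟩
          obtain ⟨S, hS⟩ := h2 i hi
          obtain ⟨T, hT⟩ := h2' i hi
          exact ⟨T * S, fun x => conjTrans S T (hS x) (hT x)⟩ }
  else γ

/-- The refinement operator `IMt_k^F`. -/
def IMtop (F : Type) [Field F] [Fintype V] [DecidableEq V] {k : ℕ}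
    (γ : Setoid (Tup V k)) : Setoid (Tup V k) :=
  if 2 < k then
    { r := fun u v => γ.r u v ∧
        ∃ S : (Matrix V V F)ˣ, ∀ φ : (Fin 2 → Fin k) → Tup V k,
          (S : Matrix V V F) * chiMatT F γ u φ * ((S⁻¹ : (Matrix V V F)ˣ) : Matrix V V F)
            = chiMatT F γ v φ
      iseqv := by
        refine ⟨fun u => ⟨γ.iseqv.refl u, ⟨1, fun φ => conjRefl _⟩⟩, ?_, ?_⟩
        · rintro u v ⟨h1, ⟨S, hS⟩⟩
          exact ⟨γ.iseqv.symm h1, ⟨S⁻¹, fun φ => conjSymm S (hS φ)⟩⟩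
        · rintro u v w ⟨h1, ⟨S, hS⟩⟩ ⟨h1', ⟨T, hT⟩⟩
          exact ⟨γ.iseqv.trans h1 h1', ⟨T * S, fun φ => conjTrans S T (hS φ) (hT φ)⟩⟩ }
  else γ

/-- Iterate a refinement operator `|V|^k` times, reaching its stable fixed point. -/
def stabilize [Fintype V] {k : ℕ} (R : Setoid (Tup V k) → Setoid (Tup V k))
    (γ : Setoid (Tup V k)) : Setoid (Tup V k) :=
  R^[Fintype.card V ^ k] γ

/-- A graph on `V` : a labelled partition of `V²` that is a rainbow. -/
def IsGraph (Γ : Setoid (Tup V 2)) : Prop :=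
  (∀ u x y : V, Γ.r ![u, u] ![x, y] → x = y) ∧
  (∀ u v u' v' : V, Γ.r ![u, v] ![u', v'] ↔ Γ.r ![v, u] ![v', u'])

/-- The atomic-type partition `α_{k,Γ}` of `V^k` determined by a graph `Γ`. -/
def atomicPart {k : ℕ} (Γ : Setoid (Tup V 2)) : Setoid (Tup V k) where
  r u v := ∀ i j : Fin k, i ≠ j → Γ.r ![u i, u j] ![v i, v j]
  iseqv := ⟨fun _ _ _ _ => Γ.iseqv.refl _, fun h i j hij => Γ.iseqv.symm (h i j hij),
    fun h h' i j hij => Γ.iseqv.trans (h i j hij) (h' i j hij)⟩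

/-- `WL̄_{k,r}(Γ)`. -/
def WLbarR [Nonempty V] [Fintype V] (k r : ℕ) (Γ : Setoid (Tup V 2)) : Setoid (Tup V 2) :=
  if k ≤ 1 then Γ else prPart 2 (stabilize (WLop (k := k) r) (atomicPart Γ))

/-- `C̄_{k,r}(Γ)`. -/
def CbarR [Nonempty V] [Fintype V] (k r : ℕ) (Γ : Setoid (Tup V 2)) : Setoid (Tup V 2) :=
  if k ≤ 1 then Γ else prPart 2 (stabilize (Cop (k := k) r) (atomicPart Γ))

/-- `WL̄_k(Γ) = WL̄_{k,1}(Γ)`. -/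
def WLbar [Nonempty V] [Fintype V] (k : ℕ) (Γ : Setoid (Tup V 2)) : Setoid (Tup V 2) :=
  WLbarR k 1 Γ

/-- `C̄_k(Γ) = C̄_{k,1}(Γ)`. -/
def Cbar [Nonempty V] [Fintype V] (k : ℕ) (Γ : Setoid (Tup V 2)) : Setoid (Tup V 2) :=
  CbarR k 1 Γ

/-- `IM̄_k^F(Γ)`. -/
def IMbar (F : Type) [Field F] [Nonempty V] [Fintype V] [DecidableEq V]
    (k : ℕ) (Γ : Setoid (Tup V 2)) : Setoid (Tup V 2) :=
  if k ≤ 1 then Γ else prPart 2 (stabilize (IMop (k := k) F) (atomicPart Γ))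

/-- `IMt̄_k^F(Γ)`. -/
def IMtbar (F : Type) [Field F] [Nonempty V] [Fintype V] [DecidableEq V]
    (k : ℕ) (Γ : Setoid (Tup V 2)) : Setoid (Tup V 2) :=
  if k ≤ 1 then Γ else prPart 2 (stabilize (IMtop (k := k) F) (atomicPart Γ))

/-- A nonempty finite set together with a graph on it. -/
structure FinGraph where
  V : Type
  [instFintype : Fintype V]
  [instDecEq : DecidableEq V]
  [instNonempty : Nonempty V]
  Γ : Setoid (Tup V 2)
  isGraph : IsGraph Γ

attribute [instance] FinGraph.instFintype FinGraph.instDecEq FinGraph.instNonempty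

theorem substTup_apply_mem {k r : ℕ} (v : Tup V k) {i : Fin r → Fin k}
    (hi : Function.Injective i) (x : Tup V r) (s : Fin r) :
    substTup v i x (i s) = x s := by
  unfold substTup
  rw [dif_pos ⟨s, rfl⟩]
  congr 1
  exact hi (⟨s, rfl⟩ : ∃ t, i t = i s).choose_spec

theorem substTup_apply_not_mem {k r : ℕ} (v : Tup V k) (i : Fin r → Fin k)
    (x : Tup V r) (p : Fin k) (h : ∀ s, i s ≠ p) :
    substTup v i x p = v p := by
  unfold substTup
  rw [dif_neg]
  rintro ⟨s, hs⟩; exact h s hs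

/-- The `(k-r+1)`-projection of a `C_{k,r}`-stable graph-like partition is `C_{k-r+1}`-stable. -/
theorem c_stable_proj_c_stable (V : Type) [Fintype V] [Nonempty V] (k r : ℕ)
    (hr1 : 1 ≤ r) (hrk : r ≤ k) (γ : Setoid (Tup V k)) (hγ : GraphLike γ)
    (h : CStable r γ) : CStable 1 (prPart (k - r + 1) γ) := by
  intro hm u v huv i hi w
  have hrk' : r < k := by omega
  obtain ⟨z1, hz1⟩ : ∃ z1 : Fin 1, ∀ t : Fin 1, t = z1 :=
    ⟨⟨0, by omega⟩, fun t => Subsingleton.elim _ _⟩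
  obtain ⟨i0, hione⟩ : ∃ i0 : Fin (k - r + 1), ∀ s : Fin 1, i s = i0 :=
    ⟨i z1, fun s => congrArg i (Subsingleton.elim s z1)⟩
  have hi0 : (i0 : ℕ) < k - r + 1 := i0.isLt
  -- the r-tuple of positions in [k]
  obtain ⟨j, hjval, hjval0⟩ :
      ∃ j : Fin r → Fin k, (∀ s : Fin r, (s : ℕ) ≠ 0 → (j s : ℕ) = k - r + s) ∧
        (∀ s : Fin r, (s : ℕ) = 0 → (j s : ℕ) = i0) := by
    refine ⟨fun s => if (s : ℕ) = 0 then ⟨i0, by omega⟩ else ⟨k - r + s, by omega⟩, ?_, ?_⟩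
    · intro s hs; simp only [if_neg hs, Fin.val_mk]
    · intro s hs; simp only [if_pos hs, Fin.val_mk]
  -- the lift of a 1-substitution to an r-substitution
  obtain ⟨F, hF0, hFs⟩ :
      ∃ F : Tup V (k - r + 1) → Tup V 1 → Tup V r,
        (∀ (a : Tup V (k - r + 1)) (x : Tup V 1) (s : Fin r), (s : ℕ) = 0 →
          F a x s = x z1) ∧
        (∀ (a : Tup V (k - r + 1)) (x : Tup V 1) (s : Fin r), (s : ℕ) ≠ 0 →
          F a x s = if (i0 : ℕ) = k - r then x z1 else a ⟨k - r, by omega⟩) := by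
    refine ⟨fun a x s => if (s : ℕ) = 0 then x z1
      else if (i0 : ℕ) = k - r then x z1 else a ⟨k - r, by omega⟩, ?_, ?_⟩
    · intro a x s hs; simp only [if_pos hs]
    · intro a x s hs; simp only [if_neg hs]
  obtain ⟨j0, hj0v⟩ : ∃ j0 : Fin r, (j0 : ℕ) = 0 := ⟨⟨0, by omega⟩, rfl⟩
  have hjj0 : (j j0 : ℕ) = i0 := hjval0 j0 hj0v
  have hj : Function.Injective j := by
    intro s t hst
    apply Fin.ext
    have hst' : (j s : ℕ) = (j t : ℕ) := by rw [hst]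
    by_cases hs : (s : ℕ) = 0 <;> by_cases ht : (t : ℕ) = 0
    · omega
    · have h1 := hjval0 s hs; have h2 := hjval t ht; omega
    · have h1 := hjval s hs; have h2 := hjval0 t ht; omega
    · have h1 := hjval s hs; have h2 := hjval t ht; omega
  have key : ∀ (a : Tup V (k - r + 1)) (x : Tup V 1),
      extendTup k (substTup a i x) = substTup (extendTup k a) j (F a x) := by
    intro a x
    funext p
    by_cases hp : (p : ℕ) < k - r + 1
    · by_cases hpi : (p : ℕ) = (i0 : ℕ)
      · have h1 : i0 = (⟨(p : ℕ), hp⟩ : Fin (k - r + 1)) := by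
          apply Fin.ext; simp only [Fin.val_mk]; omega
        have h2 : j j0 = p := by apply Fin.ext; omega
        have lhs : extendTup k (substTup a i x) p = x z1 := by
          have h3 := substTup_apply_mem a hi x z1
          rw [hione z1, h1] at h3
          rw [extendTup, dif_pos hp, h3]
        have rhs : substTup (extendTup k a) j (F a x) p = x z1 := by
          have h4 := substTup_apply_mem (extendTup k a) hj (F a x) j0
          rw [h2] at h4
          rw [h4, hF0 a x j0 hj0v]
        rw [lhs, rhs]
      · have lhs : extendTup k (substTup a i x) p = a ⟨(p : ℕ), hp⟩ := by
          rw [extendTup, dif_pos hp]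
          apply substTup_apply_not_mem
          intro s hs
          rw [hione s] at hs
          have h5 := Fin.ext_iff.mp hs
          simp only [Fin.val_mk] at h5
          omega
        have rhs : substTup (extendTup k a) j (F a x) p = a ⟨(p : ℕ), hp⟩ := by
          rw [substTup_apply_not_mem]
          · rw [extendTup, dif_pos hp]
          · intro s hs
            have hs' : (j s : ℕ) = (p : ℕ) := by rw [hs]
            by_cases h0 : (s : ℕ) = 0
            · have := hjval0 s h0; omega
            · have := hjval s h0; omega
        rw [lhs, rhs]
    · -- p ≥ k - r + 1
      have hpk : (p : ℕ) < k := p.isLt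
      have hs1 : (p : ℕ) - (k - r) < r := by omega
      set s : Fin r := ⟨(p : ℕ) - (k - r), hs1⟩ with hsdef
      have hsv : (s : ℕ) = (p : ℕ) - (k - r) := by rw [hsdef]
      clear_value s
      have hs0 : (s : ℕ) ≠ 0 := by omega
      have hjs : j s = p := by apply Fin.ext; have := hjval s hs0; omega
      have rhs : substTup (extendTup k a) j (F a x) p =
          (if (i0 : ℕ) = k - r then x z1 else a ⟨k - r, by omega⟩) := by
        have h4 := substTup_apply_mem (extendTup k a) hj (F a x) s
        rw [hjs] at h4
        rw [h4, hFs a x s hs0]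
      have lhs : extendTup k (substTup a i x) p =
          (if (i0 : ℕ) = k - r then x z1 else a ⟨k - r, by omega⟩) := by
        rw [extendTup, dif_neg hp, dif_pos (by omega : 0 < k - r + 1)]
        by_cases hlast : (i0 : ℕ) = k - r
        · rw [if_pos hlast]
          have hlasteq : i0 = (⟨k - r + 1 - 1, by omega⟩ : Fin (k - r + 1)) := by
            apply Fin.ext; simp only [Fin.val_mk]; omega
          have h3 := substTup_apply_mem a hi x z1
          rw [hione z1, hlasteq] at h3
          exact h3
        · rw [if_neg hlast]
          have hne : ∀ t : Fin 1, i t ≠ (⟨k - r + 1 - 1, by omega⟩ : Fin (k - r + 1)) := by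
            intro t ht
            rw [hione t] at ht
            have h5 := Fin.ext_iff.mp ht
            simp only [Fin.val_mk] at h5
            omega
          rw [substTup_apply_not_mem a i x _ hne]
          congr 1
      rw [lhs, rhs]
  -- computing labels of extendTup k w on the tail
  have hWtail : ∀ s : Fin r, (s : ℕ) ≠ 0 →
      extendTup k w (j s) = w ⟨k - r, by omega⟩ := by
    intro s hs
    have hjv := hjval s hs
    have hnlt : ¬ ((j s : ℕ) < k - r + 1) := by omega
    rw [extendTup, dif_neg hnlt, dif_pos (by omega : 0 < k - r + 1)]
    congr 1
  have hWmid : ∀ (a : Tup V (k - r + 1)) (hlt : k - r < k),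
      extendTup k a (⟨k - r, hlt⟩ : Fin k) = a ⟨k - r, by omega⟩ := by
    intro a hlt
    have hq : ((⟨k - r, hlt⟩ : Fin k) : ℕ) < k - r + 1 := by simp only [Fin.val_mk]; omega
    rw [extendTup, dif_pos hq]
  -- the forced-tail lemma
  have hforce : ∀ (a : Tup V (k - r + 1)) (y : Tup V r),
      γ.r (substTup (extendTup k a) j y) (extendTup k w) →
      y = F a (fun _ => y j0) := by
    intro a y hy
    funext s
    by_cases hs : (s : ℕ) = 0
    · rw [hF0 a (fun _ => y j0) s hs]
      show y s = y j0
      congr 1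
      apply Fin.ext; omega
    · have hsym : γ.r (extendTup k w) (substTup (extendTup k a) j y) := γ.iseqv.symm hy
      have hgl := hγ.2.2 _ _ hsym
      have hys : substTup (extendTup k a) j y (j s) = y s := substTup_apply_mem _ hj y s
      rw [hFs a (fun _ => y j0) s hs]
      by_cases hlast : (i0 : ℕ) = k - r
      · -- compare positions j s and j j0
        have hW0 : extendTup k w (j j0) = w ⟨k - r, by omega⟩ := by
          have hlt : ((j j0 : Fin k) : ℕ) < k - r + 1 := by omega
          rw [extendTup, dif_pos hlt]
          congr 1
          apply Fin.ext; simp only [Fin.val_mk]; omega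
        have heq := hgl (j s) (j j0) (by rw [hWtail s hs, hW0])
        have h4 := substTup_apply_mem (extendTup k a) hj y j0
        rw [hys, h4] at heq
        rw [heq, if_pos hlast]
      · -- compare positions j s and ⟨k-r, _⟩
        have hlt : k - r < k := by omega
        have hWq : extendTup k w (⟨k - r, hlt⟩ : Fin k) = w ⟨k - r, by omega⟩ :=
          hWmid w hlt
        have heq := hgl (j s) ⟨k - r, hlt⟩ (by rw [hWtail s hs, hWq])
        rw [hys] at heq
        rw [substTup_apply_not_mem] at heq
        · rw [hWmid a hlt] at heq
          rw [heq, if_neg hlast]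
        · intro t ht
          have ht' : (j t : ℕ) = k - r := by rw [ht]
          by_cases h0 : (t : ℕ) = 0
          · have := hjval0 t h0; omega
          · have := hjval t h0; omega
  -- bijection between the counting sets
  have himg : ∀ a : Tup V (k - r + 1),
      F a '' CSet (prPart (k - r + 1) γ) a i w
        = CSet γ (extendTup k a) j (extendTup k w) := by
    intro a
    ext y
    constructor
    · rintro ⟨x, hx, rfl⟩
      have hx' : γ.r (extendTup k (substTup a i x)) (extendTup k w) := hx
      rwa [key a x] at hx'
    · intro hy
      have hy' : γ.r (substTup (extendTup k a) j y) (extendTup k w) := hy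
      refine ⟨fun _ => y j0, ?_, (hforce a y hy').symm⟩
      show γ.r (extendTup k (substTup a i _)) (extendTup k w)
      rw [key a, ← hforce a y hy']
      exact hy'
  have hFinj : ∀ a : Tup V (k - r + 1), Function.Injective (F a) := by
    intro a x x' hxx
    funext t
    have h0 := congrFun hxx j0
    rw [hF0 a x j0 hj0v, hF0 a x' j0 hj0v] at h0
    rw [hz1 t]; exact h0
  have hcount : ∀ a : Tup V (k - r + 1),
      (CSet (prPart (k - r + 1) γ) a i w).ncard
        = (CSet γ (extendTup k a) j (extendTup k w)).ncard := by
    intro a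
    rw [← himg a, Set.ncard_image_of_injective _ (hFinj a)]
  rw [hcount u, hcount v]
  exact h hrk' (extendTup k u) (extendTup k v) huv j hj (extendTup k w)

end
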